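/- If a finite simple graph G is connected and has spectral radius at most 2, and G has equal numbers of vertices and edges, then G is a cycle. -/

import Mathlib

set_option maxRecDepth 8000

open SimpleGraph Finset


namespace CycleAux

variable {n : ℕ} {G : SimpleGraph (Fin n)} [DecidableRel G.Adj]

/-- the neighbor of `v` other than `w` (when `G.Adj v w` and `v` has degree 2). -/
noncomputable def other (G : SimpleGraph (Fin n)) [DecidableRel G.Adj] (v w : Fin n) : Fin n :=
  if h : ((G.neighborFinset v).erase w).Nonempty then ((G.neighborFinset v).erase w).min' h else v

variable (hdeg : ∀ v : Fin n, G.degree v = 2)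
include hdeg

lemma erase_eq {v w : Fin n} (h : G.Adj v w) :
    (G.neighborFinset v).erase w = {other G v w} := by
  have hcard : ((G.neighborFinset v).erase w).card = 1 := by
    rw [Finset.card_erase_of_mem (by rwa [SimpleGraph.mem_neighborFinset]),
      SimpleGraph.card_neighborFinset_eq_degree, hdeg v]
  have hne : ((G.neighborFinset v).erase w).Nonempty := Finset.card_pos.mp (by omega)
  have hother : other G v w ∈ (G.neighborFinset v).erase w := by
    rw [other, dif_pos hne]; exact Finset.min'_mem _ hne
  refine Finset.eq_singleton_iff_unique_mem.mpr ⟨hother, ?_⟩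
  intro x hx
  exact Finset.card_le_one.mp (by omega) x hx _ hother

lemma other_adj {v w : Fin n} (h : G.Adj v w) : G.Adj v (other G v w) := by
  have := erase_eq hdeg h
  have hmem : other G v w ∈ (G.neighborFinset v).erase w := by
    rw [this]; exact Finset.mem_singleton_self _
  exact (SimpleGraph.mem_neighborFinset _ _ _).mp (Finset.mem_of_mem_erase hmem)

lemma other_ne {v w : Fin n} (h : G.Adj v w) : other G v w ≠ w := by
  have := erase_eq hdeg h
  have hmem : other G v w ∈ (G.neighborFinset v).erase w := by
    rw [this]; exact Finset.mem_singleton_self _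
  exact Finset.ne_of_mem_erase hmem

lemma other_other {v w : Fin n} (h : G.Adj v w) : other G v (other G v w) = w := by
  have h2 : G.Adj v (other G v w) := other_adj hdeg h
  have he := erase_eq hdeg h2
  have hmem : w ∈ (G.neighborFinset v).erase (other G v w) :=
    Finset.mem_erase.mpr ⟨(other_ne hdeg h).symm, (SimpleGraph.mem_neighborFinset _ _ _).mpr h⟩
  rw [he, Finset.mem_singleton] at hmem
  exact hmem.symm

lemma adj_elim {v w x : Fin n} (h : G.Adj v w) (h2 : G.Adj v x) :
    x = w ∨ x = other G v w := by
  by_cases hx : x = w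
  · exact Or.inl hx
  · right
    have : x ∈ (G.neighborFinset v).erase w :=
      Finset.mem_erase.mpr ⟨hx, (SimpleGraph.mem_neighborFinset _ _ _).mpr h2⟩
    rw [erase_eq hdeg h, Finset.mem_singleton] at this
    exact this

omit hdeg in
/-- step along the cycle: dart `(u,v)` goes to `(v, other v u)`. -/
noncomputable def step (hdeg : ∀ v : Fin n, G.degree v = 2) (d : G.Dart) : G.Dart :=
  ⟨(d.toProd.2, other G d.toProd.2 d.toProd.1), other_adj hdeg d.adj.symm⟩

lemma step_fst (d : G.Dart) : (step hdeg d).toProd.1 = d.toProd.2 := rfl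

lemma step_snd (d : G.Dart) : (step hdeg d).toProd.2 = other G d.toProd.2 d.toProd.1 := rfl

lemma step_step_symm (d : G.Dart) : step hdeg (step hdeg d).symm = d.symm := by
  apply SimpleGraph.Dart.ext
  show ((step hdeg d).symm.toProd.2, other G _ _) = d.toProd.swap
  have h1 : (step hdeg d).symm.toProd = ((step hdeg d).toProd).swap := rfl
  rw [h1]
  simp only [Prod.snd_swap, Prod.fst_swap, step_fst, step_snd]
  rw [other_other hdeg d.adj.symm]
  rfl

lemma step_inj : Function.Injective (step hdeg) := by
  intro d1 d2 h
  have := congrArg (fun d => step hdeg d.symm) h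
  rw [step_step_symm hdeg, step_step_symm hdeg] at this
  have := congrArg SimpleGraph.Dart.symm this
  rwa [SimpleGraph.Dart.symm_symm, SimpleGraph.Dart.symm_symm] at this


omit hdeg in
lemma iso_of_two_regular (hdeg : ∀ v : Fin n, G.degree v = 2) (hconn : G.Connected) :
    Nonempty (G ≃g cycleGraph n) := by
  classical
  have hn0 : 0 < n := by
    have := hconn.nonempty
    exact Fin.pos_iff_nonempty.mpr this
  haveI : NeZero n := ⟨by omega⟩
  have hn3 : 3 ≤ n := by
    have := G.degree_lt_card_verts ⟨0, hn0⟩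
    rw [hdeg] at this
    simp at this; omega
  have h1n : 1 % n = 1 := Nat.mod_eq_of_lt (by omega)
  -- initial dart
  have hne0 : (G.neighborFinset (⟨0, hn0⟩ : Fin n)).Nonempty := by
    rw [← Finset.card_pos, SimpleGraph.card_neighborFinset_eq_degree, hdeg]; omega
  obtain ⟨w0, hw0⟩ := hne0
  set v0 : Fin n := ⟨0, hn0⟩
  have hadj0 : G.Adj v0 w0 := (SimpleGraph.mem_neighborFinset _ _ _).mp hw0
  set d0 : G.Dart := ⟨(v0, w0), hadj0⟩ with hd0
  set f : ℕ → G.Dart := fun k => (step hdeg)^[k] d0 with hf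
  have hfs : ∀ k, f (k+1) = step hdeg (f k) := by
    intro k
    show (step hdeg)^[k+1] d0 = step hdeg ((step hdeg)^[k] d0)
    rw [Function.iterate_succ_apply']
  have key : ∀ a b, a < b → f a = f b → f (b - a) = d0 := by
    intro a b hab heq
    have hb : b = a + (b - a) := by omega
    have h2 : (step hdeg)^[a] ((step hdeg)^[b-a] d0) = (step hdeg)^[a] d0 := by
      rw [← Function.iterate_add_apply, ← hb]
      exact heq.symm
    exact (step_inj hdeg).iterate a h2
  have hex : ∃ t, 0 < t ∧ f t = d0 := by
    obtain ⟨a, b, hab, heq⟩ := Finite.exists_ne_map_eq_of_infinite f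
    rcases Nat.lt_or_ge a b with h | h
    · exact ⟨b - a, by omega, key a b h heq⟩
    · have h' : b < a := by omega
      exact ⟨a - b, by omega, key b a h' heq.symm⟩
  set T := Nat.find hex with hT
  obtain ⟨hTpos, hfT⟩ : 0 < T ∧ f T = d0 := Nat.find_spec hex
  have hperiod : ∀ k, f (k + T) = f k := by
    intro k
    have h2 : f (k + T) = (step hdeg)^[k] (f T) := Function.iterate_add_apply _ k T d0
    rw [h2, hfT]
  have hmod : ∀ k, f k = f (k % T) := by
    intro k
    induction k using Nat.strong_induction_on with
    | _ k ih =>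
      by_cases h : k < T
      · rw [Nat.mod_eq_of_lt h]
      · have hk : k = (k - T) + T := by omega
        rw [hk, hperiod, ih (k - T) (by omega), Nat.add_mod_right]
  have hstate : ∀ i j, i < j → j < T → f i ≠ f j := by
    intro i j hij hjT heq
    exact Nat.find_min hex (show j - i < T by omega) ⟨by omega, key i j hij heq⟩
  set φ : ℕ → Fin n := fun k => (f k).toProd.2 with hφ
  -- injectivity of φ on [0, T)
  have hcur : ∀ j k, j < k → k < T → φ j ≠ φ k := by
    intro j k hjk hkT hsnd
    have hsnd' : (f j).toProd.2 = (f k).toProd.2 := hsnd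
    have hcl : ∀ i, i ≤ k - j - 1 → (f (k - i)).symm = f (j + 1 + i) := by
      intro i
      induction i with
      | zero =>
        intro _
        have hne : f j ≠ f k := hstate j k hjk hkT
        have hq : (f k).toProd.1 ≠ (f j).toProd.1 := by
          intro h
          exact hne (SimpleGraph.Dart.ext _ _ (Prod.ext_iff.mpr ⟨h.symm, hsnd'⟩))
        have hadjc : G.Adj ((f j).toProd.2) ((f j).toProd.1) := (f j).adj.symm
        have hadjq : G.Adj ((f j).toProd.2) ((f k).toProd.1) := by
          have h2 : G.Adj ((f k).toProd.2) ((f k).toProd.1) := (f k).adj.symm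
          rwa [← hsnd'] at h2
        rcases adj_elim hdeg hadjc hadjq with h | h
        · exact absurd h hq
        · apply SimpleGraph.Dart.ext
          show ((f k).toProd.2, (f k).toProd.1) = (f (j + 1 + 0)).toProd
          have h2 : f (j + 1 + 0) = step hdeg (f j) := hfs j
          rw [h2]
          show ((f k).toProd.2, (f k).toProd.1)
              = ((f j).toProd.2, other G ((f j).toProd.2) ((f j).toProd.1))
          rw [← h, ← hsnd']
      | succ i ih =>
        intro hi
        have hprev : (f (k - i)).symm = f (j + 1 + i) := ih (by omega)
        have hk2 : k - i = (k - (i+1)) + 1 := by omega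
        have h1 : f (k - i) = step hdeg (f (k - (i+1))) := by rw [hk2, hfs]
        have h2 := step_step_symm hdeg (f (k - (i+1)))
        rw [← h1, hprev, ← hfs] at h2
        exact h2.symm
    rcases Nat.even_or_odd (k - j - 1) with ⟨i, hi⟩ | ⟨i, hi⟩
    · have h := hcl i (by omega)
      have hki : k - i = j + 1 + i := by omega
      rw [hki] at h
      have h2 : (f (j+1+i)).toProd.2 = (f (j+1+i)).toProd.1 :=
        congrArg (fun d => d.toProd.1) h
      have hadj := (f (j+1+i)).adj
      rw [← h2] at hadj
      exact G.loopless.irrefl _ hadj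
    · have h := hcl i (by omega)
      have hki : k - i = (j + 1 + i) + 1 := by omega
      rw [hki, hfs] at h
      have h2 : other G ((f (j+1+i)).toProd.2) ((f (j+1+i)).toProd.1)
          = (f (j+1+i)).toProd.1 := congrArg (fun d => d.toProd.1) h
      exact other_ne hdeg (f (j+1+i)).adj.symm h2
  -- first coordinate
  have hfst : ∀ k, (f k).toProd.1 = φ (k + T - 1) := by
    intro k
    have h1 : f k = f (k + T) := (hperiod k).symm
    have h2 : k + T = (k + T - 1) + 1 := by omega
    rw [h1, h2, hfs]
    rfl
  -- surjectivity
  have hS : ∀ v : Fin n, ∃ k, φ k = v := by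
    have hclose : ∀ u v : Fin n, G.Adj u v → (∃ k, φ k = u) → (∃ k, φ k = v) := by
      rintro u v huv ⟨k, rfl⟩
      rcases adj_elim hdeg ((f k).adj.symm) huv with h | h
      · exact ⟨k + T - 1, by rw [← hfst k, h]⟩
      · refine ⟨k + 1, ?_⟩
        show (f (k+1)).toProd.2 = v
        rw [hfs k, h]
        rfl
    have hwalk : ∀ (a b : Fin n), G.Walk a b → (∃ k, φ k = a) → ∃ k, φ k = b := by
      intro a b w
      induction w with
      | nil => exact id
      | cons h p ih => exact fun ha => ih (hclose _ _ h ha)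
    intro v
    obtain ⟨wk⟩ := hconn.preconnected (φ 0) v
    exact hwalk _ _ wk ⟨0, rfl⟩
  have hmodφ : ∀ k, φ (k % T) = φ k := fun k =>
    (congrArg (fun d => d.toProd.2) (hmod k)).symm
  -- T = n
  have hTn : T = n := by
    have hinj : Function.Injective (fun i : Fin T => φ i.val) := by
      intro i j h
      by_contra hne
      have hne' : i.val ≠ j.val := fun hc => hne (Fin.ext hc)
      rcases Nat.lt_or_ge i.val j.val with hlt | hge
      · exact hcur _ _ hlt j.isLt h
      · exact hcur _ _ (by omega) i.isLt h.symm
    have hsurj : Function.Surjective (fun i : Fin T => φ i.val) := by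
      intro v
      obtain ⟨k, hk⟩ := hS v
      exact ⟨⟨k % T, Nat.mod_lt _ hTpos⟩, by rw [← hk]; exact hmodφ k⟩
    have h1 : T ≤ n := by simpa using Fintype.card_le_of_injective _ hinj
    have h2 : n ≤ T := by simpa using Fintype.card_le_of_surjective _ hsurj
    omega
  rw [hTn] at hcur hfst hmodφ
  -- the bijection
  have hinj' : Function.Injective (fun i : Fin n => φ i.val) := by
    intro i j h
    by_contra hne
    have hne' : i.val ≠ j.val := fun hc => hne (Fin.ext hc)
    rcases Nat.lt_or_ge i.val j.val with hlt | hge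
    · exact hcur _ _ hlt j.isLt h
    · exact hcur _ _ (by omega) i.isLt h.symm
  have hbij := Finite.injective_iff_bijective.mp hinj'
  set ψ : Fin n ≃ Fin n := Equiv.ofBijective _ hbij with hψ
  have hψapp : ∀ i : Fin n, ψ i = φ i.val := fun i => rfl
  have hadj_succ : ∀ k, G.Adj (φ k) (φ (k+1)) := by
    intro k
    have h := other_adj hdeg (f k).adj.symm
    show G.Adj ((f k).toProd.2) ((f (k+1)).toProd.2)
    rw [hfs k]
    exact h
  have hval1 : ∀ i : Fin n, ((i + 1 : Fin n)).val = (i.val + 1) % n := by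
    intro i
    rw [Fin.add_def, Fin.val_one', h1n]
  have hval2 : ∀ i : Fin n, ((i - 1 : Fin n)).val = (i.val + n - 1) % n := by
    intro i
    rw [Fin.sub_def]
    simp only [Fin.val_one', h1n]
    congr 1
    omega
  have hψsucc : ∀ i : Fin n, ψ (i + 1) = φ (i.val + 1) := by
    intro i
    rw [hψapp, hval1, hmodφ]
  have hψpred : ∀ i : Fin n, ψ (i - 1) = φ (i.val + n - 1) := by
    intro i
    rw [hψapp, hval2, hmodφ]
  have hiff : ∀ a b : Fin n, G.Adj (ψ a) (ψ b) ↔ (cycleGraph n).Adj a b := by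
    intro i j
    constructor
    · intro h
      rcases adj_elim hdeg ((f i.val).adj.symm) h with hcase | hcase
      · have hj : ψ j = ψ (i - 1) := by
          rw [hψpred, ← hfst i.val]
          exact hcase
        have hji : j = i - 1 := hinj' hj
        rw [cycleGraph_adj']
        left
        rw [hji, sub_sub_cancel, Fin.val_one', h1n]
      · have hj : ψ j = ψ (i + 1) := by
          rw [hψsucc]
          show ψ j = (f (i.val + 1)).toProd.2
          rw [hfs, hcase]
          rfl
        have hji : j = i + 1 := hinj' hj
        rw [cycleGraph_adj']
        right
        rw [hji, add_sub_cancel_left, Fin.val_one', h1n]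
    · intro h
      rw [cycleGraph_adj'] at h
      have hone : (1 : Fin n).val = 1 := by rw [Fin.val_one', h1n]
      rcases h with h | h
      · -- i - j = 1, so i = j + 1
        have hij : i = j + 1 := by
          have : i - j = 1 := Fin.ext (by rw [hone]; exact h)
          have := congrArg (fun x => x + j) this
          simpa [sub_add_cancel, add_comm] using this
        rw [hij, hψsucc]
        exact ((hadj_succ j.val).symm : G.Adj _ (ψ j)).symm |>.symm
      · have hij : j = i + 1 := by
          have : j - i = 1 := Fin.ext (by rw [hone]; exact h)
          have := congrArg (fun x => x + i) this
          simpa [sub_add_cancel, add_comm] using this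
        rw [hij, hψsucc]
        exact hadj_succ i.val
  exact ⟨(SimpleGraph.Iso.symm ⟨ψ, fun {a b} => hiff a b⟩)⟩

end CycleAux


private lemma degree_eq_two {n : ℕ} (G : SimpleGraph (Fin n))
    [DecidableRel G.Adj]
    (hspec : ∀ μ : ℝ, (∃ v : Fin n → ℝ, v ≠ 0 ∧ (G.adjMatrix ℝ).mulVec v = μ • v) →
      |μ| ≤ 2)
    (hcount : G.edgeFinset.card = n) :
    ∀ v, G.degree v = 2 := by
  classical
  set A : Matrix (Fin n) (Fin n) ℝ := G.adjMatrix ℝ with hAdef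
  set M : Matrix (Fin n) (Fin n) ℝ := (2 : ℝ) • 1 - A with hMdef
  have hM : M.IsHermitian := by
    ext i j
    simp [hMdef, hAdef, Matrix.conjTranspose_apply, Matrix.one_apply, SimpleGraph.adj_comm,
      Matrix.sub_apply, Matrix.smul_apply, eq_comm]
  have hAM : ∀ v : Fin n → ℝ, M.mulVec v = (2 : ℝ) • v - A.mulVec v := by
    intro v
    rw [hMdef, Matrix.sub_mulVec, Matrix.smul_mulVec, Matrix.one_mulVec]
  have hpsd : M.PosSemidef := by
    apply hM.posSemidef_iff_eigenvalues_nonneg.mpr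
    intro i
    set μ := hM.eigenvalues i
    set v : Fin n → ℝ := ⇑(hM.eigenvectorBasis i) with hv
    have hvne : v ≠ 0 := fun h => hM.eigenvectorBasis.orthonormal.ne_zero i
      (by simpa [hv] using congrArg (WithLp.toLp 2) h)
    have hMv : M.mulVec v = μ • v := hM.mulVec_eigenvectorBasis i
    have hAv : A.mulVec v = (2 - μ) • v := by
      rw [hAM] at hMv
      have : A.mulVec v = (2:ℝ) • v - μ • v := by
        rw [← hMv]; abel
      rw [this, sub_smul]
    have := hspec (2 - μ) ⟨v, hvne, hAv⟩
    have h2 := (abs_le.mp this).2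
    linarith [show (0 : Fin n → ℝ) i = 0 from rfl]
  have hone : (dotProduct (star (fun _ : Fin n => (1:ℝ))) (M.mulVec fun _ => 1)) = 0 := by
    have hstar : star (fun _ : Fin n => (1:ℝ)) = fun _ => (1:ℝ) := by
      ext i; simp
    rw [hstar, dotProduct, hAM]
    have : ∀ x : Fin n, ((2:ℝ) • (fun _ : Fin n => (1:ℝ)) - A.mulVec fun _ => 1) x
        = 2 - (G.degree x : ℝ) := by
      intro x
      rw [Pi.sub_apply, Pi.smul_apply, hAdef, SimpleGraph.adjMatrix_mulVec_apply]
      rw [Finset.sum_const, SimpleGraph.card_neighborFinset_eq_degree]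
      simp
    simp only [this, one_mul]
    rw [Finset.sum_sub_distrib]
    have hdeg : ∑ x : Fin n, (G.degree x : ℝ) = 2 * n := by
      rw [← Nat.cast_sum]
      rw [G.sum_degrees_eq_twice_card_edges, hcount]
      push_cast; ring
    rw [hdeg]
    simp [mul_comm]
  have hzero : M.mulVec (fun _ => 1) = 0 := (hpsd.dotProduct_mulVec_zero_iff _).mp hone
  intro v
  have := congrFun hzero v
  rw [hAM] at this
  simp only [Pi.sub_apply, Pi.smul_apply, Pi.zero_apply, smul_eq_mul, mul_one,
    SimpleGraph.adjMatrix_mulVec_apply] at this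
  have : (2:ℝ) - (G.degree v : ℝ) = 0 := by
    rw [hAdef, SimpleGraph.adjMatrix_mulVec_apply, Finset.sum_const, SimpleGraph.card_neighborFinset_eq_degree] at this
    simpa using this
  have : (G.degree v : ℝ) = 2 := by linarith
  exact_mod_cast this


/-- A connected finite simple graph with spectral radius at most `2` and with
equally many vertices and edges is a cycle. -/
theorem connected_specRad_le_two_eq_cycle {n : ℕ} (G : SimpleGraph (Fin n))
    [DecidableRel G.Adj] (hconn : G.Connected)
    (hspec : ∀ μ : ℝ, (∃ v : Fin n → ℝ, v ≠ 0 ∧ (G.adjMatrix ℝ).mulVec v = μ • v) →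
      |μ| ≤ 2)
    (hcount : G.edgeFinset.card = n) :
    Nonempty (G ≃g SimpleGraph.cycleGraph n) :=
  CycleAux.iso_of_two_regular (degree_eq_two G hspec hcount) hconn
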